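/- Let m < n be positive integers and k ≥ 2. Then ∏_{j=1}^{k-1} (1 + km − jn)/j ≤ k · (n / r_{m,n})^k in absolute value, i.e., |∏_{j=1}^{k-1} (1 + km − jn)/j| ≤ k · (n/r_{m,n})^k, where r_{m,n} = n/(m^{m/n}(n-m)^{(n-m)/n}). -/

import Mathlib

open Finset Nat

/-- The binomial pmf term at the mode `i` is at least `1/(N+1)`. -/
lemma binom_max' (N i : ℕ) (p : ℝ) (hp : 0 < p) (hp1 : p < 1) (hiN : i ≤ N)
    (hlo : ∀ j : ℕ, j < i → (j : ℝ) + 1 ≤ ((N : ℝ) + 1) * p)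
    (hhi : ∀ j : ℕ, i ≤ j → ((N : ℝ) + 1) * p ≤ (j : ℝ) + 1) :
    1 ≤ ((N : ℝ) + 1) * ((N.choose i : ℝ) * p ^ i * (1 - p) ^ (N - i)) := by
  set q : ℝ := 1 - p with hq
  have hq0 : 0 < q := by simp only [hq]; linarith
  set t : ℕ → ℝ := fun j => (N.choose j : ℝ) * p ^ j * q ^ (N - j) with ht
  have ht0 : ∀ j, 0 ≤ t j := fun j => by
    have h1 := hp.le; have h2 := hq0.le; positivity
  have key : ∀ j, j < N → t (j+1) * (((j:ℝ)+1) * q) = t j * (((N:ℝ) - j) * p) := by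
    intro j hj
    have hch : ((N.choose (j+1) * (j+1) : ℕ) : ℝ) = (N.choose j : ℝ) * ((N:ℝ) - j) := by
      rw [Nat.choose_succ_right_eq]
      push_cast [Nat.cast_sub hj.le]
      ring
    have hNs : N - j = (N - (j+1)) + 1 := by omega
    have h1 : t (j+1) * (((j:ℝ)+1) * q)
        = ((N.choose (j+1) * (j+1) : ℕ) : ℝ) * p ^ (j+1) * q ^ (N - j) := by
      rw [hNs]; push_cast [ht]; ring
    rw [h1, hch]
    simp only [ht]
    ring
  have step_up : ∀ j, j < i → t j ≤ t (j+1) := by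
    intro j hj
    have hjN : j < N := lt_of_lt_of_le hj hiN
    have h1 := hlo j hj
    have h2 : ((j:ℝ)+1) * q ≤ ((N:ℝ) - j) * p := by
      simp only [hq]; nlinarith
    have h3 : t j * (((j:ℝ)+1) * q) ≤ t j * (((N:ℝ) - j) * p) :=
      mul_le_mul_of_nonneg_left h2 (ht0 j)
    rw [← key j hjN] at h3
    have hpos : (0:ℝ) < ((j:ℝ)+1) * q := by positivity
    exact le_of_mul_le_mul_right h3 hpos
  have step_dn : ∀ j, i ≤ j → j < N → t (j+1) ≤ t j := by
    intro j hj hjN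
    have h1 := hhi j hj
    have h2 : ((N:ℝ) - j) * p ≤ ((j:ℝ)+1) * q := by
      simp only [hq]; nlinarith
    have h3 : t j * (((N:ℝ) - j) * p) ≤ t j * (((j:ℝ)+1) * q) :=
      mul_le_mul_of_nonneg_left h2 (ht0 j)
    rw [← key j hjN] at h3
    have hpos : (0:ℝ) < ((j:ℝ)+1) * q := by positivity
    exact le_of_mul_le_mul_right h3 hpos
  have up : ∀ d j, j + d = i → t j ≤ t i := by
    intro d
    induction d with
    | zero => intro j h; simp only [Nat.add_zero] at h; rw [h]
    | succ d ih => intro j h; exact (step_up j (by omega)).trans (ih (j+1) (by omega))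
  have dn : ∀ d j, j = i + d → j ≤ N → t j ≤ t i := by
    intro d
    induction d with
    | zero => intro j h _; simp only [Nat.add_zero] at h; rw [h]
    | succ d ih =>
        intro j h hjN
        have : j = (i + d) + 1 := by omega
        subst this
        exact (step_dn (i+d) (by omega) (by omega)).trans (ih (i+d) rfl (by omega))
  have hmax : ∀ j ∈ range (N+1), t j ≤ t i := by
    intro j hj
    rw [mem_range] at hj
    rcases le_or_gt j i with h | h
    · exact up (i - j) j (by omega)
    · exact dn (j - i) j (by omega) (by omega)
  have hsum : ∑ j ∈ range (N+1), t j = 1 := by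
    have := add_pow p q N
    have hpq : p + q = 1 := by simp [hq]
    rw [hpq, one_pow] at this
    rw [this]
    refine sum_congr rfl fun j _ => ?_
    simp only [ht]; ring
  calc (1:ℝ) = ∑ j ∈ range (N+1), t j := hsum.symm
    _ ≤ ∑ _j ∈ range (N+1), t i := sum_le_sum hmax
    _ = ((N:ℝ) + 1) * t i := by
        rw [sum_const, card_range, nsmul_eq_mul]; push_cast; ring

lemma prod_aux' (n i N : ℕ) (hiN : i ≤ N) :
    ∏ j ∈ Icc 1 N, (if j ≤ i then (i+1-j)*n else (j-i)*n) = i ! * (N-i)! * n ^ N := by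
  have hIcc : Icc 1 N = Ioc 0 N := by rw [← Finset.Icc_add_one_left_eq_Ioc]; rfl
  rw [hIcc, ← prod_Ioc_consecutive _ (Nat.zero_le i) hiN]
  have h1 : (∏ j ∈ Ioc 0 i, (if j ≤ i then (i+1-j)*n else (j-i)*n)) = i ! * n ^ i := by
    rw [prod_congr rfl (g := fun j => (i+1-j)*n) (fun j hj => by
      rw [mem_Ioc] at hj; rw [if_pos hj.2])]
    rw [prod_mul_distrib, prod_const, Nat.card_Ioc, Nat.sub_zero]
    congr 1
    refine (prod_bij' (fun j _ => i - j) (fun x _ => i - x) ?_ ?_ ?_ ?_ ?_).trans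
      (prod_range_add_one_eq_factorial i)
    · intro a ha; simp only [mem_Ioc, mem_range] at ha ⊢; omega
    · intro a ha; simp only [mem_Ioc, mem_range] at ha ⊢; omega
    · intro a ha; simp only [mem_Ioc, mem_range] at ha ⊢; omega
    · intro a ha; simp only [mem_Ioc, mem_range] at ha ⊢; omega
    · intro a ha; simp only [mem_Ioc, mem_range] at ha ⊢; omega
  have h2 : (∏ j ∈ Ioc i N, (if j ≤ i then (i+1-j)*n else (j-i)*n)) = (N-i)! * n ^ (N-i) := by
    rw [prod_congr rfl (g := fun j => (j-i)*n) (fun j hj => by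
      rw [mem_Ioc] at hj; rw [if_neg (by omega)])]
    rw [prod_mul_distrib, prod_const, Nat.card_Ioc]
    congr 1
    refine (prod_bij' (fun j _ => j - i - 1) (fun x _ => x + i + 1) ?_ ?_ ?_ ?_ ?_).trans
      (prod_range_add_one_eq_factorial (N - i))
    · intro a ha; simp only [mem_Ioc, mem_range] at ha ⊢; omega
    · intro a ha; simp only [mem_Ioc, mem_range] at ha ⊢; omega
    · intro a ha; simp only [mem_Ioc, mem_range] at ha ⊢; omega
    · intro a ha; simp only [mem_Ioc, mem_range] at ha ⊢; omega
    · intro a ha; simp only [mem_Ioc, mem_range] at ha ⊢; omega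
  rw [h1, h2, show N = i + (N - i) by omega, pow_add,
    show i + (N - i) - i = N - i by omega]
  ring

theorem product_bound_mid (m n : ℕ) (hm : 0 < m) (hmn : m < n) (k : ℕ) (hk : 2 ≤ k) :
    |∏ j ∈ Finset.Icc 1 (k - 1), ((1 + (k : ℝ) * m - (j : ℝ) * n) / (j : ℝ))| ≤
      (k : ℝ) * ((n : ℝ) / ((n : ℝ) / ((m : ℝ) ^ ((m : ℝ) / (n : ℝ)) *
        ((n : ℝ) - (m : ℝ)) ^ (((n : ℝ) - (m : ℝ)) / (n : ℝ))))) ^ k := by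
  have hn : 0 < n := by omega
  have hn0 : (0:ℝ) < n := by exact_mod_cast hn
  have hm0 : (0:ℝ) < m := by exact_mod_cast hm
  have hmnR : (m:ℝ) < n := by exact_mod_cast hmn
  have hnm0 : (0:ℝ) < (n:ℝ) - m := by linarith
  have hm1 : (1:ℝ) ≤ m := by exact_mod_cast hm
  have hnm1 : (1:ℝ) ≤ (n:ℝ) - m := by
    have : (m:ℝ) + 1 ≤ n := by exact_mod_cast hmn
    linarith
  set M : ℝ := (m:ℝ) ^ ((m:ℝ)/(n:ℝ)) * ((n:ℝ)-(m:ℝ)) ^ (((n:ℝ)-(m:ℝ))/(n:ℝ)) with hM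
  have hM0 : 0 < M :=
    mul_pos (Real.rpow_pos_of_pos hm0 _) (Real.rpow_pos_of_pos hnm0 _)
  rw [show (n:ℝ) / ((n:ℝ)/M) = M by field_simp]
  have hkm : k*m + k ≤ k*n := by
    have h1 : k*(m+1) ≤ k*n := Nat.mul_le_mul_left k (by omega)
    have h2 : k*(m+1) = k*m + k := by ring
    linarith
  obtain ⟨i, r, hdm, hrn'⟩ : ∃ i r, i * n + r = k*m ∧ r < n :=
    ⟨k*m/n, k*m % n, by rw [mul_comm]; exact Nat.div_add_mod _ _, Nat.mod_lt _ hn⟩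
  by_cases hz : r + 1 = n
  · -- zero factor case
    have hj₀n : (i+1) * n = k*m + 1 := by
      have h1 : (i+1) * n = i*n + n := by ring
      linarith
    have hj₀k : i+1 < k := by
      by_contra h
      push_neg at h
      have h2 : k * n ≤ (i+1) * n := Nat.mul_le_mul_right n h
      have h3 : (2:ℕ) ≤ k := hk
      linarith
    have hmem : i+1 ∈ Icc 1 (k-1) := mem_Icc.mpr ⟨by omega, by omega⟩
    rw [Finset.prod_eq_zero hmem (by
      have h := congrArg (Nat.cast : ℕ → ℝ) hj₀n
      push_cast at h
      have hnum : (1 + (k:ℝ)*m - ((i+1:ℕ):ℝ)*(n:ℝ)) = 0 := by push_cast; linarith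
      rw [hnum, zero_div])]
    simp only [abs_zero]
    positivity
  · -- main case
    have hrn : r + 2 ≤ n := by omega
    have hin : i * n ≤ k * m := by linarith
    have hik : i < k := by
      by_contra h
      push_neg at h
      have h2 : k * n ≤ i * n := Nat.mul_le_mul_right n h
      have h3 : (2:ℕ) ≤ k := hk
      linarith
    have hik1 : i ≤ k - 1 := by omega
    have hdmR : (i:ℝ) * n + r = (k:ℝ) * m := by exact_mod_cast hdm
    have hrnR : (r:ℝ) + 2 ≤ n := by exact_mod_cast hrn
    have hr0 : (0:ℝ) ≤ r := Nat.cast_nonneg r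
    -- pointwise bound on factors
    have habs : ∀ j ∈ Icc 1 (k-1), |1 + (k:ℝ)*m - (j:ℝ)*n| ≤
        ((if j ≤ i then (i+1-j)*n else (j-i)*n : ℕ) : ℝ) := by
      intro j hj
      rw [mem_Icc] at hj
      by_cases hji : j ≤ i
      · rw [if_pos hji]
        have hjiR : (j:ℝ) ≤ i := by exact_mod_cast hji
        have hcast : (((i+1-j)*n : ℕ):ℝ) = ((i:ℝ)+1-(j:ℝ))*n := by
          push_cast [Nat.cast_sub (by omega : j ≤ i+1)]
          ring
        have hjn : (j:ℝ)*n ≤ (i:ℝ)*n := mul_le_mul_of_nonneg_right hjiR hn0.le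
        have hpos : (0:ℝ) ≤ 1 + (k:ℝ)*m - (j:ℝ)*n := by linarith
        rw [hcast, abs_of_nonneg hpos]
        linarith
      · rw [if_neg hji]
        have hjiR : (i:ℝ) + 1 ≤ j := by
          have h : i + 1 ≤ j := by omega
          exact_mod_cast h
        have hcast : (((j-i)*n : ℕ):ℝ) = ((j:ℝ)-(i:ℝ))*n := by
          push_cast [Nat.cast_sub (by omega : i ≤ j)]
          ring
        have hjn : ((i:ℝ)+1)*n ≤ (j:ℝ)*n := mul_le_mul_of_nonneg_right hjiR hn0.le
        have hneg : 1 + (k:ℝ)*m - (j:ℝ)*n ≤ 0 := by linarith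
        rw [hcast, abs_of_nonpos hneg]
        linarith
    have hprodbound : (∏ j ∈ Icc 1 (k-1), |1 + (k:ℝ)*m - (j:ℝ)*n|) ≤
        ((i ! * (k-1-i)! * n^(k-1) : ℕ) : ℝ) := by
      calc (∏ j ∈ Icc 1 (k-1), |1 + (k:ℝ)*m - (j:ℝ)*n|)
          ≤ ∏ j ∈ Icc 1 (k-1), ((if j ≤ i then (i+1-j)*n else (j-i)*n : ℕ) : ℝ) :=
            Finset.prod_le_prod (fun j _ => abs_nonneg _) habs
        _ = ((∏ j ∈ Icc 1 (k-1), (if j ≤ i then (i+1-j)*n else (j-i)*n) : ℕ) : ℝ) := by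
            rw [Nat.cast_prod]
        _ = _ := by rw [prod_aux' n i (k-1) hik1]
    -- mode bound
    have hp0 : (0:ℝ) < (m:ℝ)/n := by positivity
    have hp1 : (m:ℝ)/n < 1 := (div_lt_one hn0).mpr hmnR
    have hk1R : ((k-1:ℕ):ℝ) = (k:ℝ) - 1 := by
      rw [Nat.cast_sub (by omega : 1 ≤ k)]
      norm_num
    have hlo : ∀ j : ℕ, j < i → (j:ℝ) + 1 ≤ (((k-1:ℕ):ℝ) + 1) * ((m:ℝ)/n) := by
      intro j hj
      have h1 : (j+1) * n ≤ i * n := Nat.mul_le_mul_right n (by omega)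
      have h1R : ((j:ℝ)+1) * n ≤ (i:ℝ) * n := by exact_mod_cast h1
      rw [hk1R, sub_add_cancel, ← mul_div_assoc, le_div_iff₀ hn0]
      linarith
    have hhi : ∀ j : ℕ, i ≤ j → (((k-1:ℕ):ℝ) + 1) * ((m:ℝ)/n) ≤ (j:ℝ) + 1 := by
      intro j hj
      have h1 : (i+1) * n ≤ (j+1) * n := Nat.mul_le_mul_right n (by omega)
      have h1R : ((i:ℝ)+1) * n ≤ ((j:ℝ)+1) * n := by exact_mod_cast h1
      rw [hk1R, sub_add_cancel, ← mul_div_assoc, div_le_iff₀ hn0]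
      linarith
    have hmode := binom_max' (k-1) i ((m:ℝ)/n) hp0 hp1 hik1 hlo hhi
    rw [hk1R, sub_add_cancel] at hmode
    have hqeq : 1 - (m:ℝ)/n = ((n:ℝ)-m)/n := by field_simp
    rw [hqeq] at hmode
    -- rewrite abs of product
    have hfact0 : (0:ℝ) < ((k-1)! : ℝ) := by exact_mod_cast Nat.factorial_pos (k-1)
    have hsplit_abs : |∏ j ∈ Icc 1 (k-1), ((1 + (k:ℝ)*m - (j:ℝ)*n)/(j:ℝ))|
        = (∏ j ∈ Icc 1 (k-1), |1 + (k:ℝ)*m - (j:ℝ)*n|) / ((k-1)! : ℝ) := by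
      rw [Finset.abs_prod]
      simp only [abs_div]
      rw [Finset.prod_div_distrib]
      congr 1
      have habsj : ∀ x ∈ Icc 1 (k-1), |(x:ℝ)| = ((x:ℕ):ℝ) :=
        fun x _ => abs_of_nonneg (Nat.cast_nonneg x)
      rw [Finset.prod_congr rfl habsj, ← Nat.cast_prod]
      congr 1
      rw [show Icc 1 (k-1) = Ico 1 ((k-1)+1) by rw [Finset.Ico_add_one_right_eq_Icc]]
      exact prod_Ico_id_eq_factorial (k-1)
    rw [hsplit_abs, div_le_iff₀ hfact0]
    -- exponent splitting
    have hMk : M ^ k = (m:ℝ)^(((m:ℝ)/n)*k) * ((n:ℝ)-m)^((((n:ℝ)-m)/n)*k) := by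
      rw [hM, mul_pow, ← Real.rpow_natCast ((m:ℝ)^((m:ℝ)/n)) k,
        ← Real.rpow_natCast (((n:ℝ)-m)^(((n:ℝ)-m)/n)) k,
        ← Real.rpow_mul hm0.le, ← Real.rpow_mul hnm0.le]
    have hki1R : ((k-1-i:ℕ):ℝ) = (k:ℝ) - 1 - i := by
      rw [Nat.cast_sub hik1, hk1R]
    have hsplitA : ((m:ℝ)/n)*k = (i:ℝ) + (r:ℝ)/n := by
      rw [div_mul_eq_mul_div, mul_comm (m:ℝ) (k:ℝ), ← hdmR, _root_.add_div,
        mul_div_cancel_right₀ _ hn0.ne']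
    have hsplitB : (((n:ℝ)-m)/n)*k = ((k-1-i:ℕ):ℝ) + ((n:ℝ)-r)/n := by
      rw [hki1R, div_mul_eq_mul_div, mul_comm ((n:ℝ)-(m:ℝ)) (k:ℝ)]
      have hnum : (k:ℝ)*((n:ℝ)-m) = ((k:ℝ)-1-(i:ℝ))*n + ((n:ℝ)-r) := by linarith
      rw [hnum, _root_.add_div, mul_div_cancel_right₀ _ hn0.ne']
    have hcore : (m:ℝ)^(i:ℕ) * ((n:ℝ)-m)^((k-1-i):ℕ) ≤ M ^ k := by
      rw [hMk, hsplitA, hsplitB, Real.rpow_add hm0, Real.rpow_add hnm0,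
        Real.rpow_natCast, Real.rpow_natCast]
      have h1 : 1 ≤ (m:ℝ)^((r:ℝ)/n) := Real.one_le_rpow hm1 (by positivity)
      have h2 : 1 ≤ ((n:ℝ)-m)^(((n:ℝ)-r)/n) :=
        Real.one_le_rpow hnm1 (div_nonneg (by linarith) hn0.le)
      have hb1 : (0:ℝ) ≤ (m:ℝ)^(i:ℕ) := by positivity
      have hb2 : (0:ℝ) ≤ ((n:ℝ)-m)^((k-1-i):ℕ) := by positivity
      have := mul_le_mul (le_mul_of_one_le_right hb1 h1) (le_mul_of_one_le_right hb2 h2)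
        hb2 (by positivity)
      calc (m:ℝ)^(i:ℕ) * ((n:ℝ)-m)^((k-1-i):ℕ)
          ≤ ((m:ℝ)^(i:ℕ) * (m:ℝ)^((r:ℝ)/n)) *
            (((n:ℝ)-m)^((k-1-i):ℕ) * ((n:ℝ)-m)^(((n:ℝ)-r)/n)) := this
        _ = _ := by ring
    -- final chain
    have hchoose : ((k-1).choose i * i ! * (k-1-i)! : ℕ) = (k-1)! :=
      Nat.choose_mul_factorial_mul_factorial hik1
    have hcR : ((k-1).choose i : ℝ) * (i ! : ℝ) * ((k-1-i)! : ℝ) = ((k-1)! : ℝ) := by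
      exact_mod_cast congrArg (Nat.cast : ℕ → ℝ) hchoose
    have hmid : ((i ! * (k-1-i)! * n^(k-1) : ℕ) : ℝ) *
        ((k:ℝ) * (((k-1).choose i : ℝ) * ((m:ℝ)/n)^i * (((n:ℝ)-m)/n)^(k-1-i)))
        = (k:ℝ) * ((m:ℝ)^(i:ℕ) * ((n:ℝ)-m)^((k-1-i):ℕ)) * ((k-1)! : ℝ) := by
      have hpow : (n:ℝ)^(k-1) = (n:ℝ)^i * (n:ℝ)^(k-1-i) := by
        rw [← pow_add]
        congr 1
        omega
      have hnne : (n:ℝ) ≠ 0 := hn0.ne'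
      push_cast
      rw [div_pow, div_pow, hpow, ← hcR]
      field_simp
    calc (∏ j ∈ Icc 1 (k-1), |1 + (k:ℝ)*m - (j:ℝ)*n|)
        ≤ ((i ! * (k-1-i)! * n^(k-1) : ℕ) : ℝ) := hprodbound
      _ ≤ ((i ! * (k-1-i)! * n^(k-1) : ℕ) : ℝ) *
          ((k:ℝ) * (((k-1).choose i : ℝ) * ((m:ℝ)/n)^i * (((n:ℝ)-m)/n)^(k-1-i))) := by
          apply le_mul_of_one_le_right (Nat.cast_nonneg _)
          calc (1:ℝ) ≤ (k:ℝ) * (((k-1).choose i : ℝ) * ((m:ℝ)/n)^i * (((n:ℝ)-m)/n)^(k-1-i)) :=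
                hmode
            _ = _ := by ring
      _ = (k:ℝ) * ((m:ℝ)^(i:ℕ) * ((n:ℝ)-m)^((k-1-i):ℕ)) * ((k-1)! : ℝ) := hmid
      _ ≤ (k:ℝ) * M^k * ((k-1)! : ℝ) := by
          have hk0 : (0:ℝ) ≤ k := Nat.cast_nonneg k
          exact mul_le_mul_of_nonneg_right (mul_le_mul_of_nonneg_left hcore hk0) hfact0.le
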